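/- Let G be a bi-matrix game on n pure strategies with all payoff entries in [0,1], let M > 0 and θ ≥ 1/M, and let ε ≥ 0. If (x*, y*) is a (θ, ε)-restricted disjoint equilibrium of G, then (x*, y*) is an ε-Nash equilibrium of the diagonally modified game D^M(G) (and it has disjoint supports). -/
import Mathlib


open Finset

/-- The probability simplex over a finite strategy set `S`. -/
def simplex (S : Type*) [Fintype S] : Set (S → ℝ) :=
  {x | (∀ i, 0 ≤ x i) ∧ ∑ i, x i = 1}

/-- Expected payoff `Σᵢⱼ xᵢ yⱼ A i j`. -/
def payoff {S : Type*} [Fintype S] (A : S → S → ℝ) (x y : S → ℝ) : ℝ :=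
  ∑ i, ∑ j, x i * y j * A i j

/-- The point mass at pure strategy `s`. -/
def pureStrat {S : Type*} [DecidableEq S] (s : S) : S → ℝ :=
  fun i => if i = s then 1 else 0

/-- Support of a mixed strategy. -/
def supp {S : Type*} (x : S → ℝ) : Set S := {i | 0 < x i}

/-- L1 distance between mixed strategies. -/
def dist1 {S : Type*} [Fintype S] (x y : S → ℝ) : ℝ := ∑ i, |x i - y i|

/-- `(x, y)` is an ε-Nash equilibrium of the bi-matrix game `(R, C)`. -/
def IsEpsNash {S : Type*} [Fintype S] [DecidableEq S]
    (R C : S → S → ℝ) (x y : S → ℝ) (ε : ℝ) : Prop :=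
  x ∈ simplex S ∧ y ∈ simplex S ∧
  (∀ s : S, payoff R (pureStrat s) y ≤ payoff R x y + ε) ∧
  (∀ s : S, payoff C x (pureStrat s) ≤ payoff C x y + ε)

/-- `(x, y)` is an ε-constrained disjoint equilibrium: the supports are disjoint
and neither player can gain more than ε by deviating to a mixed strategy whose
support is disjoint from the opponent's support. -/
def IsConstrainedDisjointEq {S : Type*} [Fintype S]
    (R C : S → S → ℝ) (x y : S → ℝ) (ε : ℝ) : Prop :=
  x ∈ simplex S ∧ y ∈ simplex S ∧ supp x ∩ supp y = ∅ ∧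
  (∀ x' ∈ simplex S, supp x' ∩ supp y = ∅ → payoff R x' y ≤ payoff R x y + ε) ∧
  (∀ y' ∈ simplex S, supp y' ∩ supp x = ∅ → payoff C x y' ≤ payoff C x y + ε)

/-- The diagonally modified payoff matrix: all diagonal entries replaced by `-M`. -/
def diagMod {n : ℕ} (A : Fin n → Fin n → ℝ) (M : ℝ) : Fin n → Fin n → ℝ :=
  fun i j => if i = j then -M else A i j

/-- A (θ, ε)-restricted disjoint equilibrium: an ε-constrained disjoint equilibrium
in which every strictly positive coordinate of `x` and of `y` exceeds θ. -/
def IsRestrictedDisjointEq {S : Type*} [Fintype S]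
    (R C : S → S → ℝ) (x y : S → ℝ) (θ ε : ℝ) : Prop :=
  IsConstrainedDisjointEq R C x y ε ∧
  (∀ i, 0 < x i → θ < x i) ∧ (∀ i, 0 < y i → θ < y i)


section Aux
variable {S : Type*} [Fintype S] [DecidableEq S]

lemma payoff_pure_left (A : S → S → ℝ) (s : S) (y : S → ℝ) :
    payoff A (pureStrat s) y = ∑ j, y j * A s j := by
  unfold payoff pureStrat
  rw [Finset.sum_eq_single s]
  · simp
  · intro b _ hb; simp [hb]
  · simp

lemma payoff_pure_right (A : S → S → ℝ) (x : S → ℝ) (s : S) :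
    payoff A x (pureStrat s) = ∑ i, x i * A i s := by
  unfold payoff pureStrat
  refine Finset.sum_congr rfl fun i _ => ?_
  rw [Finset.sum_eq_single s]
  · simp
  · intro b _ hb; simp [hb]
  · simp

omit [Fintype S] [DecidableEq S] in
lemma prod_zero_of_disj {x y : S → ℝ} (hx : ∀ i, 0 ≤ x i) (hy : ∀ i, 0 ≤ y i)
    (hd : supp x ∩ supp y = ∅) (i : S) : x i * y i = 0 := by
  by_cases h : 0 < x i
  · have : ¬ (0 < y i) := by
      intro h'
      have : i ∈ supp x ∩ supp y := ⟨h, h'⟩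
      rw [hd] at this; exact this
    have : y i = 0 := le_antisymm (not_lt.mp this) (hy i)
    simp [this]
  · have : x i = 0 := le_antisymm (not_lt.mp h) (hx i)
    simp [this]

end Aux

lemma payoff_diagMod_eq {n : ℕ} (A : Fin n → Fin n → ℝ) (M : ℝ) {x y : Fin n → ℝ}
    (hx : ∀ i, 0 ≤ x i) (hy : ∀ i, 0 ≤ y i) (hd : supp x ∩ supp y = ∅) :
    payoff (diagMod A M) x y = payoff A x y := by
  unfold payoff diagMod
  refine Finset.sum_congr rfl fun i _ => Finset.sum_congr rfl fun j _ => ?_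
  by_cases hij : i = j
  · subst hij
    rw [prod_zero_of_disj hx hy hd i]
    simp
  · simp [hij]

lemma payoff_nonneg {n : ℕ} {A : Fin n → Fin n → ℝ} (hA : ∀ i j, A i j ∈ Set.Icc (0:ℝ) 1)
    {x y : Fin n → ℝ} (hx : ∀ i, 0 ≤ x i) (hy : ∀ i, 0 ≤ y i) :
    0 ≤ payoff A x y := by
  refine Finset.sum_nonneg fun i _ => Finset.sum_nonneg fun j _ => ?_
  exact mul_nonneg (mul_nonneg (hx i) (hy j)) (hA i j).1

lemma diag_sum_le {n : ℕ} {A : Fin n → Fin n → ℝ} (hA : ∀ i j, A i j ∈ Set.Icc (0:ℝ) 1)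
    {M θ : ℝ} (hM : 0 < M) (hθ : 1 / M ≤ θ) {y : Fin n → ℝ} (hy : ∀ i, 0 ≤ y i)
    (hy1 : ∑ i, y i = 1) {s : Fin n} (hs : θ < y s) :
    ∑ j, y j * (if s = j then -M else A s j) ≤ 0 := by
  rw [← Finset.add_sum_erase _ _ (Finset.mem_univ s)]
  have h1 : y s * (if s = s then -M else A s s) = -(M * y s) := by
    simp [mul_comm]
  rw [h1]
  have hMys : 1 ≤ M * y s := by
    have h2 : 1 / M ≤ y s := le_of_lt (lt_of_le_of_lt hθ hs)
    calc (1:ℝ) = M * (1 / M) := by field_simp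
    _ ≤ M * y s := by exact mul_le_mul_of_nonneg_left h2 (le_of_lt hM)
  have h3 : ∑ j ∈ Finset.univ.erase s, y j * (if s = j then -M else A s j)
      ≤ ∑ j ∈ Finset.univ.erase s, y j := by
    refine Finset.sum_le_sum fun j hj => ?_
    have hjs : s ≠ j := fun h => (Finset.mem_erase.mp hj).1 h.symm
    rw [if_neg hjs]
    calc y j * A s j ≤ y j * 1 := mul_le_mul_of_nonneg_left (hA s j).2 (hy j)
    _ = y j := mul_one _
  have h4 : ∑ j ∈ Finset.univ.erase s, y j = 1 - y s := by
    have := Finset.add_sum_erase _ y (Finset.mem_univ s)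
    rw [hy1] at this; linarith
  have hys : 0 ≤ y s := hy s
  linarith [h3, h4.le, h4.ge]

theorem stmt9 {n : ℕ} (R C : Fin n → Fin n → ℝ)
    (hR : ∀ i j, R i j ∈ Set.Icc (0 : ℝ) 1) (hC : ∀ i j, C i j ∈ Set.Icc (0 : ℝ) 1)
    (M θ ε : ℝ) (hM : 0 < M) (hθ : 1 / M ≤ θ) (hε : 0 ≤ ε)
    (x y : Fin n → ℝ) (h : IsRestrictedDisjointEq R C x y θ ε) :
    IsEpsNash (diagMod R M) (diagMod C M) x y ε ∧ supp x ∩ supp y = ∅ := by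
  
  obtain ⟨⟨hxS, hyS, hdisj, hdevR, hdevC⟩, hxθ, hyθ⟩ := h
  obtain ⟨hx0, hx1⟩ := hxS
  obtain ⟨hy0, hy1⟩ := hyS
  have hpR : payoff (diagMod R M) x y = payoff R x y :=
    payoff_diagMod_eq R M hx0 hy0 hdisj
  have hpC : payoff (diagMod C M) x y = payoff C x y :=
    payoff_diagMod_eq C M hx0 hy0 hdisj
  refine ⟨⟨⟨hx0, hx1⟩, ⟨hy0, hy1⟩, ?_, ?_⟩, hdisj⟩
  · intro s
    rw [hpR, payoff_pure_left]
    by_cases hs : 0 < y s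
    · have hle : ∑ j, y j * diagMod R M s j ≤ 0 := by
        have := diag_sum_le hR hM hθ hy0 hy1 (hyθ s hs)
        simpa [diagMod] using this
      have h0 : 0 ≤ payoff R x y := payoff_nonneg hR hx0 hy0
      linarith
    · have hys : y s = 0 := le_antisymm (not_lt.mp hs) (hy0 s)
      have hdev : payoff R (pureStrat s) y ≤ payoff R x y + ε := by
        refine hdevR (pureStrat s) ⟨fun i => ?_, ?_⟩ ?_
        · unfold pureStrat; split <;> norm_num
        · simp [pureStrat]
        · ext i
          simp only [Set.mem_inter_iff, Set.mem_empty_iff_false, iff_false]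
          rintro ⟨h1, h2⟩
          have : i = s := by
            by_contra hi
            simp [supp, pureStrat, hi] at h1
          subst this
          exact absurd h2 (by simp [supp, hys])
      rw [payoff_pure_left] at hdev
      have heq : ∑ j, y j * diagMod R M s j = ∑ j, y j * R s j := by
        refine Finset.sum_congr rfl fun j _ => ?_
        by_cases hj : s = j
        · subst hj; simp [hys]
        · simp [diagMod, hj]
      rw [heq]; exact hdev
  · intro s
    rw [hpC, payoff_pure_right]
    by_cases hs : 0 < x s
    · have hle : ∑ i, x i * diagMod C M i s ≤ 0 := by
        have := diag_sum_le (A := fun i j => C j i) (fun i j => hC j i) hM hθ hx0 hx1 (hxθ s hs)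
        have heq : ∑ i, x i * diagMod C M i s
            = ∑ j, x j * (if s = j then -M else C j s) := by
          refine Finset.sum_congr rfl fun i _ => ?_
          by_cases hi : i = s
          · subst hi; simp [diagMod]
          · simp [diagMod, hi, Ne.symm hi]
        rw [heq]; exact this
      have h0 : 0 ≤ payoff C x y := payoff_nonneg hC hx0 hy0
      linarith
    · have hxs : x s = 0 := le_antisymm (not_lt.mp hs) (hx0 s)
      have hdev : payoff C x (pureStrat s) ≤ payoff C x y + ε := by
        refine hdevC (pureStrat s) ⟨fun i => ?_, ?_⟩ ?_
        · unfold pureStrat; split <;> norm_num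
        · simp [pureStrat]
        · ext i
          simp only [Set.mem_inter_iff, Set.mem_empty_iff_false, iff_false]
          rintro ⟨h1, h2⟩
          have : i = s := by
            by_contra hi
            simp [supp, pureStrat, hi] at h1
          subst this
          exact absurd h2 (by simp [supp, hxs])
      rw [payoff_pure_right] at hdev
      have heq : ∑ i, x i * diagMod C M i s = ∑ i, x i * C i s := by
        refine Finset.sum_congr rfl fun i _ => ?_
        by_cases hi : i = s
        · subst hi; simp [hxs]
        · simp [diagMod, hi]
      rw [heq]; exact hdev
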